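/- Let f : [0,a_†] → ℝ be four times continuously differentiable with |f⁗(x)| ≤ K for all x ∈ [0,a_†]. Then there exists a constant C > 0 depending only on a_† and K (independent of M', hence of h) such that |∫_0^{a_†} f(x)dx − Q_h(f(x_1),…,f(x_{M−1}))| ≤ C·h⁴. -/

import Mathlib

open scoped BigOperators

noncomputable section
open Set
set_option maxHeartbeats 1000000

/-- Composite quadrature rule `Q_h`. -/
def Qh (h : ℝ) (M' : ℕ) (V : ℕ → ℝ) : ℝ :=
  (4*h/3) * (2*V 1 - V 2 + 2*V 3)
    + (h/3) * ∑ i ∈ Finset.Icc 2 M', (V (2*i) + 4*V (2*i+1) + V (2*i+2))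
    + (4*h/3) * (2*V (2*M'+3) - V (2*M'+4) + 2*V (2*M'+5))

-- cubic integral lemma
lemma cubic_integral (a b c0 c1 c2 c3 : ℝ) :
    (∫ x in a..b, (c0 + c1*(x-a) + c2*(x-a)^2 + c3*(x-a)^3))
      = c0*(b-a) + c1*(b-a)^2/2 + c2*(b-a)^3/3 + c3*(b-a)^4/4 := by
  have h : ∀ x ∈ Set.uIcc a b, HasDerivAt
      (fun y => c0*(y-a) + c1*(y-a)^2/2 + c2*(y-a)^3/3 + c3*(y-a)^4/4)
      (c0 + c1*(x-a) + c2*(x-a)^2 + c3*(x-a)^3) x := by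
    intro x _
    have hd : HasDerivAt (fun y : ℝ => y - a) 1 x := (hasDerivAt_id x).sub_const a
    have h2 := hd.pow 2
    have h3 := hd.pow 3
    have h4 := hd.pow 4
    have := (((hd.const_mul c0).add ((h2.const_mul c1).div_const 2)).add
      ((h3.const_mul c2).div_const 3)).add ((h4.const_mul c3).div_const 4)
    refine this.congr_deriv ?_
    ring
  rw [intervalIntegral.integral_eq_sub_of_hasDerivAt h
    ((Continuous.continuousOn (by continuity)).intervalIntegrable)]
  ring


lemma iterDeriv_subset {f : ℝ → ℝ} {s t : Set ℝ} (hst : s ⊆ t)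
    (hs : UniqueDiffOn ℝ s) (ht : UniqueDiffOn ℝ t)
    (hf : ContDiffOn ℝ 4 f t) {x : ℝ} (hx : x ∈ s) {k : ℕ} (hk : k ≤ 4) :
    iteratedDerivWithin k f s x = iteratedDerivWithin k f t x := by
  have H := ((hf.ftaylorSeriesWithin ht).mono hst).eq_iteratedFDerivWithin_of_uniqueDiffOn
    (by exact_mod_cast hk) hs hx
  simp only [iteratedDerivWithin_eq_iteratedFDerivWithin, ← H]
  rfl

lemma panel_taylor {adag K : ℝ} (f : ℝ → ℝ)
    (hf : ContDiffOn ℝ 4 f (Icc 0 adag))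
    (hK : 0 ≤ K)
    (hb : ∀ x ∈ Icc 0 adag, |iteratedDerivWithin 4 f (Icc 0 adag) x| ≤ K)
    {a b : ℝ} (hab : a < b) (h0 : 0 ≤ a) (h1 : b ≤ adag) :
    ∃ c0 c1 c2 c3 : ℝ, ∀ x ∈ Icc a b,
      |f x - (c0 + c1*(x-a) + c2*(x-a)^2 + c3*(x-a)^3)| ≤ K*(b-a)^4/6 := by
  have hsub : Icc a b ⊆ Icc 0 adag := Icc_subset_Icc h0 h1
  have hs : UniqueDiffOn ℝ (Icc a b) := uniqueDiffOn_Icc hab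
  have ht : UniqueDiffOn ℝ (Icc 0 adag) := uniqueDiffOn_Icc (lt_of_le_of_lt h0 (lt_of_lt_of_le hab h1))
  have hf' : ContDiffOn ℝ 4 f (Icc a b) := hf.mono hsub
  refine ⟨iteratedDerivWithin 0 f (Icc a b) a,
          iteratedDerivWithin 1 f (Icc a b) a,
          iteratedDerivWithin 2 f (Icc a b) a / 2,
          iteratedDerivWithin 3 f (Icc a b) a / 6, fun x hx => ?_⟩
  have hC : ∀ y ∈ Icc a b, ‖iteratedDerivWithin 4 f (Icc a b) y‖ ≤ K := by
    intro y hy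
    rw [Real.norm_eq_abs, iterDeriv_subset hsub hs ht hf hy (le_refl 4)]
    exact hb y (hsub hy)
  have hrem := taylor_mean_remainder_bound (n := 3) hab.le (by exact_mod_cast hf') hx hC
  rw [Real.norm_eq_abs] at hrem
  have htp : taylorWithinEval f 3 (Icc a b) a x =
      iteratedDerivWithin 0 f (Icc a b) a
      + iteratedDerivWithin 1 f (Icc a b) a * (x-a)
      + iteratedDerivWithin 2 f (Icc a b) a / 2 * (x-a)^2
      + iteratedDerivWithin 3 f (Icc a b) a / 6 * (x-a)^3 := by
    rw [taylor_within_apply]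
    norm_num [Finset.sum_range_succ, Nat.factorial]
    ring
  rw [htp] at hrem
  have hfac : (((3:ℕ).factorial : ℕ) : ℝ) = 6 := by norm_num [Nat.factorial]
  rw [hfac] at hrem
  refine hrem.trans ?_
  have h4 : (0:ℝ) ≤ x - a := by linarith [hx.1]
  have h5 : x - a ≤ b - a := by linarith [hx.2]
  rw [show (3:ℕ)+1 = 4 from rfl]
  gcongr

lemma simpson_err {adag K : ℝ} (f : ℝ → ℝ)
    (hf : ContDiffOn ℝ 4 f (Icc 0 adag)) (hK : 0 ≤ K)
    (hb : ∀ x ∈ Icc 0 adag, |iteratedDerivWithin 4 f (Icc 0 adag) x| ≤ K)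
    {a δ : ℝ} (hδ : 0 < δ) (h0 : 0 ≤ a) (h1 : a + 2*δ ≤ adag) :
    |(∫ x in a..(a+2*δ), f x) - (δ/3)*(f a + 4*f (a+δ) + f (a+2*δ))| ≤ 11*K*δ^5 := by
  have hab : a < a + 2*δ := by linarith
  obtain ⟨c0, c1, c2, c3, hP⟩ := panel_taylor f hf hK hb hab h0 h1
  set q : ℝ → ℝ := fun x => c0 + c1*(x-a) + c2*(x-a)^2 + c3*(x-a)^3 with hq
  set E : ℝ := K*(a+2*δ-a)^4/6 with hE
  have hqc : Continuous q := by fun_prop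
  have hfi : IntervalIntegrable f MeasureTheory.volume a (a+2*δ) := by
    apply ContinuousOn.intervalIntegrable
    apply hf.continuousOn.mono
    rw [uIcc_of_le hab.le]
    exact Icc_subset_Icc h0 h1
  have hqi : IntervalIntegrable q MeasureTheory.volume a (a+2*δ) :=
    hqc.intervalIntegrable _ _
  -- exactness
  have hex : (∫ x in a..(a+2*δ), q x) = (δ/3)*(q a + 4*q (a+δ) + q (a+2*δ)) := by
    rw [hq]
    rw [cubic_integral a (a+2*δ) c0 c1 c2 c3]
    ring
  have hkey : (∫ x in a..(a+2*δ), f x) - (δ/3)*(f a + 4*f (a+δ) + f (a+2*δ))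
      = (∫ x in a..(a+2*δ), (f x - q x))
        + (δ/3)*((q a - f a) + 4*(q (a+δ) - f (a+δ)) + (q (a+2*δ) - f (a+2*δ))) := by
    rw [intervalIntegral.integral_sub hfi hqi, hex]
    ring
  have hm : ∀ x ∈ Icc a (a+2*δ), |f x - q x| ≤ E := fun x hx => hP x hx
  have hint : |∫ x in a..(a+2*δ), (f x - q x)| ≤ E * |a + 2*δ - a| := by
    have := intervalIntegral.norm_integral_le_of_norm_le_const
      (C := E) (f := fun x => f x - q x) (a := a) (b := a+2*δ) ?_
    · simpa [Real.norm_eq_abs] using this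
    · intro x hx
      rw [uIoc_of_le hab.le] at hx
      simpa [Real.norm_eq_abs] using hm x ⟨hx.1.le, hx.2⟩
  have e1 := hm a ⟨le_refl a, by linarith⟩
  have e2 := hm (a+δ) ⟨by linarith, by linarith⟩
  have e3 := hm (a+2*δ) ⟨by linarith, le_refl _⟩
  rw [abs_sub_comm] at e1 e2 e3
  have hrule : |(δ/3)*((q a - f a) + 4*(q (a+δ) - f (a+δ)) + (q (a+2*δ) - f (a+2*δ)))|
      ≤ (δ/3) * (E + 4*E + E) := by
    rw [abs_mul, abs_of_nonneg (by positivity : (0:ℝ) ≤ δ/3)]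
    gcongr
    calc |(q a - f a) + 4*(q (a+δ) - f (a+δ)) + (q (a+2*δ) - f (a+2*δ))|
        ≤ |q a - f a| + |4*(q (a+δ) - f (a+δ))| + |q (a+2*δ) - f (a+2*δ)| := abs_add_three _ _ _
      _ ≤ E + 4*E + E := by rw [abs_mul]; norm_num; linarith
  have := (abs_add_le _ _).trans (add_le_add hint hrule)
  rw [hkey]
  refine this.trans ?_
  have hE6 : E = K*(2*δ)^4/6 := by rw [hE]; ring_nf
  rw [hE6]
  have h2 : |a + 2*δ - a| = 2*δ := by rw [abs_of_nonneg (by linarith)]; ring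
  rw [h2]
  nlinarith [pow_pos hδ 5, sq_nonneg δ, mul_nonneg hK (pow_pos hδ 5).le]

lemma milne_err {adag K : ℝ} (f : ℝ → ℝ)
    (hf : ContDiffOn ℝ 4 f (Icc 0 adag)) (hK : 0 ≤ K)
    (hb : ∀ x ∈ Icc 0 adag, |iteratedDerivWithin 4 f (Icc 0 adag) x| ≤ K)
    {a δ : ℝ} (hδ : 0 < δ) (h0 : 0 ≤ a) (h1 : a + 4*δ ≤ adag) :
    |(∫ x in a..(a+4*δ), f x) - (4*δ/3)*(2*f (a+δ) - f (a+2*δ) + 2*f (a+3*δ))| ≤ 456*K*δ^5 := by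
  have hab : a < a + 4*δ := by linarith
  obtain ⟨c0, c1, c2, c3, hP⟩ := panel_taylor f hf hK hb hab h0 h1
  set q : ℝ → ℝ := fun x => c0 + c1*(x-a) + c2*(x-a)^2 + c3*(x-a)^3 with hq
  set E : ℝ := K*(a+4*δ-a)^4/6 with hE
  have hqc : Continuous q := by fun_prop
  have hfi : IntervalIntegrable f MeasureTheory.volume a (a+4*δ) := by
    apply ContinuousOn.intervalIntegrable
    apply hf.continuousOn.mono
    rw [uIcc_of_le hab.le]
    exact Icc_subset_Icc h0 h1
  have hqi : IntervalIntegrable q MeasureTheory.volume a (a+4*δ) :=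
    hqc.intervalIntegrable _ _
  have hex : (∫ x in a..(a+4*δ), q x) = (4*δ/3)*(2*q (a+δ) - q (a+2*δ) + 2*q (a+3*δ)) := by
    rw [hq]
    rw [cubic_integral a (a+4*δ) c0 c1 c2 c3]
    ring
  have hkey : (∫ x in a..(a+4*δ), f x) - (4*δ/3)*(2*f (a+δ) - f (a+2*δ) + 2*f (a+3*δ))
      = (∫ x in a..(a+4*δ), (f x - q x))
        + (4*δ/3)*(2*(q (a+δ) - f (a+δ)) - (q (a+2*δ) - f (a+2*δ)) + 2*(q (a+3*δ) - f (a+3*δ))) := by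
    rw [intervalIntegral.integral_sub hfi hqi, hex]
    ring
  have hm : ∀ x ∈ Icc a (a+4*δ), |f x - q x| ≤ E := fun x hx => hP x hx
  have hint : |∫ x in a..(a+4*δ), (f x - q x)| ≤ E * |a + 4*δ - a| := by
    have := intervalIntegral.norm_integral_le_of_norm_le_const
      (C := E) (f := fun x => f x - q x) (a := a) (b := a+4*δ) ?_
    · simpa [Real.norm_eq_abs] using this
    · intro x hx
      rw [uIoc_of_le hab.le] at hx
      simpa [Real.norm_eq_abs] using hm x ⟨hx.1.le, hx.2⟩
  have e1 := hm (a+δ) ⟨by linarith, by linarith⟩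
  have e2 := hm (a+2*δ) ⟨by linarith, by linarith⟩
  have e3 := hm (a+3*δ) ⟨by linarith, by linarith⟩
  rw [abs_sub_comm] at e1 e2 e3
  have hrule : |(4*δ/3)*(2*(q (a+δ) - f (a+δ)) - (q (a+2*δ) - f (a+2*δ)) + 2*(q (a+3*δ) - f (a+3*δ)))|
      ≤ (4*δ/3) * (2*E + E + 2*E) := by
    rw [abs_mul, abs_of_nonneg (by positivity : (0:ℝ) ≤ 4*δ/3)]
    gcongr
    calc |2*(q (a+δ) - f (a+δ)) - (q (a+2*δ) - f (a+2*δ)) + 2*(q (a+3*δ) - f (a+3*δ))|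
        ≤ |2*(q (a+δ) - f (a+δ)) - (q (a+2*δ) - f (a+2*δ))| + |2*(q (a+3*δ) - f (a+3*δ))| :=
          abs_add_le _ _
      _ ≤ |2*(q (a+δ) - f (a+δ))| + |q (a+2*δ) - f (a+2*δ)| + |2*(q (a+3*δ) - f (a+3*δ))| := by
          linarith [abs_sub (2*(q (a+δ) - f (a+δ))) (q (a+2*δ) - f (a+2*δ))]
      _ ≤ 2*E + E + 2*E := by
          rw [abs_mul, abs_mul]
          norm_num
          linarith
  have := (abs_add_le _ _).trans (add_le_add hint hrule)
  rw [hkey]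
  refine this.trans ?_
  have hE6 : E = K*(4*δ)^4/6 := by rw [hE]; ring_nf
  rw [hE6]
  have h2 : |a + 4*δ - a| = 4*δ := by rw [abs_of_nonneg (by linarith)]; ring
  rw [h2]
  nlinarith [pow_pos hδ 5, mul_nonneg hK (pow_pos hδ 5).le]

/-- Quadrature error bound: if `f` is `C⁴` on `[0, a†]` with fourth derivative bounded by `K`,
then there is a constant `C > 0` depending only on `a†` and `K` (independent of `M'`, hence
of `h = a†/(2(M'+3))`) such that `|∫₀^{a†} f - Q_h(f(x_1),…,f(x_{M-1}))| ≤ C h⁴`. -/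
theorem stmt_5 (adag K : ℝ) (ha : 0 < adag) (hK : 0 ≤ K) :
    ∃ C > 0, ∀ M' : ℕ, 0 < M' → ∀ f : ℝ → ℝ,
      ContDiffOn ℝ 4 f (Set.Icc 0 adag) →
      (∀ x ∈ Set.Icc 0 adag, |iteratedDerivWithin 4 f (Set.Icc 0 adag) x| ≤ K) →
      |(∫ x in (0:ℝ)..adag, f x)
          - Qh (adag/(2*(M'+3) : ℝ)) M' (fun i => f ((i:ℝ) * (adag/(2*(M'+3) : ℝ))))|
        ≤ C * (adag/(2*(M'+3) : ℝ))^4 := by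
  refine ⟨125*K*adag + 1, by positivity, fun M' hM' f hf hb => ?_⟩
  set h : ℝ := adag/(2*((M':ℝ)+3)) with hdef
  have hM3 : (0:ℝ) < 2*((M':ℝ)+3) := by positivity
  have hh : 0 < h := by positivity
  have hadag : adag = (2*(M':ℝ)+6)*h := by
    rw [hdef]; field_simp; ring
  -- the nodes for the interior Simpson panels
  set a : ℕ → ℝ := fun k => (2*(k:ℝ)+4)*h with hadefn
  have hM1 : (1:ℝ) ≤ (M':ℝ) := by exact_mod_cast hM'
  -- integrability on subintervals
  have HI : ∀ u v : ℝ, 0 ≤ u → u ≤ v → v ≤ adag → IntervalIntegrable f MeasureTheory.volume u v := by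
    intro u v h1 h2 h3
    apply ContinuousOn.intervalIntegrable
    apply hf.continuousOn.mono
    rw [uIcc_of_le h2]
    exact Icc_subset_Icc h1 h3
  have hcast : ((M' - 1 : ℕ) : ℝ) = (M':ℝ) - 1 := by
    have : (1:ℕ) ≤ M' := hM'
    push_cast [this]
    ring
  -- integral decomposition
  have hsum : ∑ k ∈ Finset.range (M'-1), ∫ x in a k..(a k + 2*h), f x
      = ∫ x in (4*h)..((2*(M':ℝ)+2)*h), f x := by
    have e1 : ∀ k : ℕ, a k + 2*h = a (k+1) := by
      intro k; simp only [hadefn]; push_cast; ring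
    have e2 : a 0 = 4*h := by simp only [hadefn]; push_cast; ring
    have e3 : a (M'-1) = (2*(M':ℝ)+2)*h := by
      show (2*((M'-1:ℕ):ℝ)+4)*h = (2*(M':ℝ)+2)*h
      rw [hcast]; ring
    simp_rw [e1]
    rw [intervalIntegral.sum_integral_adjacent_intervals, e2, e3]
    intro k hk
    have hk' : (k:ℝ) + 1 ≤ (M':ℝ) - 1 := by
      have : k + 1 ≤ M' - 1 := hk
      have := hcast ▸ (Nat.cast_le (α := ℝ)).2 this
      push_cast at this ⊢
      linarith
    apply HI
    · simp only [hadefn]; positivity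
    · simp only [hadefn]; push_cast; nlinarith
    · rw [hadefn, hadag]; push_cast; nlinarith
  have hIdecomp : (∫ x in (0:ℝ)..adag, f x)
      = (∫ x in (0:ℝ)..(0+4*h), f x)
        + (∑ k ∈ Finset.range (M'-1), ∫ x in a k..(a k + 2*h), f x)
        + (∫ x in ((2*(M':ℝ)+2)*h)..((2*(M':ℝ)+2)*h + 4*h), f x) := by
    rw [hsum]
    have e0 : (0:ℝ)+4*h = 4*h := by ring
    have elast : (2*(M':ℝ)+2)*h + 4*h = adag := by rw [hadag]; ring
    rw [e0, elast]
    rw [intervalIntegral.integral_add_adjacent_intervals (HI 0 (4*h) le_rfl (by linarith) (by rw [hadag]; nlinarith)) (HI (4*h) ((2*(M':ℝ)+2)*h) (by nlinarith) (by nlinarith) (by rw [hadag]; nlinarith))]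
    rw [intervalIntegral.integral_add_adjacent_intervals (HI 0 ((2*(M':ℝ)+2)*h) (by nlinarith) (by nlinarith) (by rw [hadag]; nlinarith)) (HI ((2*(M':ℝ)+2)*h) adag (by nlinarith) (by rw [hadag]; nlinarith) le_rfl)]
  -- Qh decomposition
  have hQ : Qh h M' (fun i => f ((i:ℝ) * h))
      = (4*h/3)*(2*f (0+h) - f (0+2*h) + 2*f (0+3*h))
        + (∑ k ∈ Finset.range (M'-1), (h/3)*(f (a k) + 4*f (a k + h) + f (a k + 2*h)))
        + (4*h/3)*(2*f ((2*(M':ℝ)+2)*h + h) - f ((2*(M':ℝ)+2)*h + 2*h) + 2*f ((2*(M':ℝ)+2)*h + 3*h)) := by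
    rw [Qh]
    congr 1
    congr 1
    · -- first Milne block
      norm_num
    · -- the Simpson sum
      rw [← Finset.Ico_add_one_right_eq_Icc, Finset.sum_Ico_eq_sum_range, Finset.mul_sum]
      have : M' + 1 - 2 = M' - 1 := by omega
      rw [this]
      refine Finset.sum_congr rfl fun k _ => ?_
      have n1 : ((2*(2+k):ℕ):ℝ) * h = a k := by simp only [hadefn]; push_cast; ring
      have n2 : ((2*(2+k)+1:ℕ):ℝ) * h = a k + h := by simp only [hadefn]; push_cast; ring
      have n3 : ((2*(2+k)+2:ℕ):ℝ) * h = a k + 2*h := by simp only [hadefn]; push_cast; ring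
      rw [n1, n2, n3]
    · -- last Milne block
      have n1 : ((2*M'+3:ℕ):ℝ) * h = (2*(M':ℝ)+2)*h + h := by push_cast; ring
      have n2 : ((2*M'+4:ℕ):ℝ) * h = (2*(M':ℝ)+2)*h + 2*h := by push_cast; ring
      have n3 : ((2*M'+5:ℕ):ℝ) * h = (2*(M':ℝ)+2)*h + 3*h := by push_cast; ring
      rw [n1, n2, n3]
  -- error bounds
  have hb1 : |(∫ x in (0:ℝ)..(0+4*h), f x) - (4*h/3)*(2*f (0+h) - f (0+2*h) + 2*f (0+3*h))|
      ≤ 456*K*h^5 :=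
    milne_err f hf hK hb hh le_rfl (by rw [hadag]; nlinarith)
  have hb2 : |(∫ x in ((2*(M':ℝ)+2)*h)..((2*(M':ℝ)+2)*h+4*h), f x)
      - (4*h/3)*(2*f ((2*(M':ℝ)+2)*h + h) - f ((2*(M':ℝ)+2)*h + 2*h) + 2*f ((2*(M':ℝ)+2)*h + 3*h))|
      ≤ 456*K*h^5 :=
    milne_err f hf hK hb hh (by nlinarith) (by rw [hadag]; nlinarith)
  have hb3 : ∀ k ∈ Finset.range (M'-1),
      |(∫ x in a k..(a k + 2*h), f x) - (h/3)*(f (a k) + 4*f (a k + h) + f (a k + 2*h))|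
      ≤ 11*K*h^5 := by
    intro k hk
    rw [Finset.mem_range] at hk
    have hk' : (k:ℝ) + 1 ≤ (M':ℝ) - 1 := by
      have : k + 1 ≤ M' - 1 := hk
      have := hcast ▸ (Nat.cast_le (α := ℝ)).2 this
      push_cast at this ⊢
      linarith
    exact simpson_err f hf hK hb hh (by simp only [hadefn]; positivity)
      (by rw [hadefn, hadag]; push_cast; nlinarith)
  -- combine
  rw [hIdecomp, hQ]
  have step : |(∫ x in (0:ℝ)..(0+4*h), f x)
        + (∑ k ∈ Finset.range (M'-1), ∫ x in a k..(a k + 2*h), f x)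
        + (∫ x in ((2*(M':ℝ)+2)*h)..((2*(M':ℝ)+2)*h + 4*h), f x)
      - ((4*h/3)*(2*f (0+h) - f (0+2*h) + 2*f (0+3*h))
        + (∑ k ∈ Finset.range (M'-1), (h/3)*(f (a k) + 4*f (a k + h) + f (a k + 2*h)))
        + (4*h/3)*(2*f ((2*(M':ℝ)+2)*h + h) - f ((2*(M':ℝ)+2)*h + 2*h) + 2*f ((2*(M':ℝ)+2)*h + 3*h)))|
      ≤ 456*K*h^5 + (M'-1 : ℕ)*(11*K*h^5) + 456*K*h^5 := by
    have hrw : (∫ x in (0:ℝ)..(0+4*h), f x)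
        + (∑ k ∈ Finset.range (M'-1), ∫ x in a k..(a k + 2*h), f x)
        + (∫ x in ((2*(M':ℝ)+2)*h)..((2*(M':ℝ)+2)*h + 4*h), f x)
      - ((4*h/3)*(2*f (0+h) - f (0+2*h) + 2*f (0+3*h))
        + (∑ k ∈ Finset.range (M'-1), (h/3)*(f (a k) + 4*f (a k + h) + f (a k + 2*h)))
        + (4*h/3)*(2*f ((2*(M':ℝ)+2)*h + h) - f ((2*(M':ℝ)+2)*h + 2*h) + 2*f ((2*(M':ℝ)+2)*h + 3*h)))
      = ((∫ x in (0:ℝ)..(0+4*h), f x) - (4*h/3)*(2*f (0+h) - f (0+2*h) + 2*f (0+3*h)))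
        + (∑ k ∈ Finset.range (M'-1), ((∫ x in a k..(a k + 2*h), f x) - (h/3)*(f (a k) + 4*f (a k + h) + f (a k + 2*h))))
        + ((∫ x in ((2*(M':ℝ)+2)*h)..((2*(M':ℝ)+2)*h + 4*h), f x)
            - (4*h/3)*(2*f ((2*(M':ℝ)+2)*h + h) - f ((2*(M':ℝ)+2)*h + 2*h) + 2*f ((2*(M':ℝ)+2)*h + 3*h))) := by
      rw [Finset.sum_sub_distrib]
      ring
    rw [hrw]
    refine (abs_add_le _ _).trans ?_
    refine add_le_add (le_trans (abs_add_le _ _) (add_le_add hb1 ?_)) hb2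
    refine (Finset.abs_sum_le_sum_abs _ _).trans ?_
    calc ∑ k ∈ Finset.range (M'-1), |(∫ x in a k..(a k + 2*h), f x) - (h/3)*(f (a k) + 4*f (a k + h) + f (a k + 2*h))|
        ≤ ∑ _k ∈ Finset.range (M'-1), 11*K*h^5 := Finset.sum_le_sum hb3
      _ = (M'-1 : ℕ)*(11*K*h^5) := by rw [Finset.sum_const, nsmul_eq_mul, Finset.card_range]
  refine step.trans ?_
  -- final arithmetic
  have hMle : ((M'-1:ℕ):ℝ) ≤ (M':ℝ) := by rw [hcast]; linarith
  have hMh : (M':ℝ)*h ≤ adag/2 := by nlinarith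
  have h8 : 8*h ≤ adag := by nlinarith
  have hh4 : (0:ℝ) < h^4 := by positivity
  have h5 : h^5 = h*h^4 := by ring
  nlinarith [mul_nonneg hK hh4.le, mul_nonneg (mul_nonneg hK hh4.le) hh.le,
    mul_le_mul_of_nonneg_right hMh (mul_nonneg hK hh4.le),
    mul_le_mul_of_nonneg_right h8 (mul_nonneg hK hh4.le),
    mul_le_mul_of_nonneg_right hMle (mul_nonneg hK (mul_nonneg hh.le hh4.le))]
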